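/- Let p/q = [a_1,…,a_n] be an irreducible fraction with 0 < p/q < 1, p and q both odd (p/q ≡ 1/1 mod 2), a_1 ≥ 2, and N = a_1 + ⋯ + a_n − 1. Then in ℤ[t, t^{−1}]: S̃F[1, a_1−1, a_2,…,a_n](t) = (−1)^N · t^{s} · S̃F[a_1,…,a_n](t^{−1}), where s = Σ_{i=1}^N e_i and the signs e_i used on both sides are those of AT(p/q) (which coincide with those of AT((q−p)/q)). -/

import Mathlib

/-!
Ancestral triangles of continued fractions (Yamada / Farey diagrams),
following "Cluster variables and Alexander polynomials of 2-bridge knots".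
-/

noncomputable section

open scoped BigOperators

attribute [local instance] Classical.propDecidable

namespace TwoBridge

/-- The continued fraction `[a₁,…,aₙ] = 1/(a₁ + 1/(a₂ + ⋯ + 1/aₙ))`. -/
def cf : List ℕ → ℚ
  | [] => 0
  | a :: t => 1 / ((a : ℚ) + cf t)

/-- Partial sums `l_k = a₁ + ⋯ + a_k`. -/
def ell (a : List ℕ) (k : ℕ) : ℕ := (a.take k).sum

/-- The index of the fan containing the `i`-th triangle (1-based): the least `k` with
`i ≤ l_k − 1`.  Fan 1 consists of `T_1, …, T_{a₁−1}` and, for `k ≥ 2`, fan `k` consists of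
`T_{l_{k−1}}, …, T_{l_k − 1}`. -/
def fanIdx (a : List ℕ) (i : ℕ) : ℕ := sInf {k | i < ell a k}

/-- The `i`-th triangle (1-based) of the ancestral triangle of `[a₁,…,aₙ]` is a *right*
triangle iff it lies in an odd-indexed fan (first `a₁ − 1` triangles are right, the next
`a₂` left, the next `a₃` right, and so on alternately). -/
def isRight (a : List ℕ) (i : ℕ) : Prop := Odd (fanIdx a i)

/-- Vertex indices of the ancestral triangle: `0 ↦ 0/1`, `1 ↦ 1/1`, and `j + 1 ↦` the apex
(new vertex) of the triangle `T_j`.  `edgeIdx a i` is the pair of vertex indices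
(left endpoint, right endpoint) of the most recently created edge after stacking `i`
triangles; the triangle `T_{i+1}` is stacked on this edge. -/
def edgeIdx (a : List ℕ) : ℕ → ℕ × ℕ
  | 0 => (0, 1)
  | i + 1 => if isRight a (i + 1) then ((edgeIdx a i).1, i + 2) else (i + 2, (edgeIdx a i).2)

/-- The labels (numerator, denominator) of the endpoints of the active edge after stacking
`i` triangles; the new vertex of each triangle is labelled by the mediant of the two
endpoints of the edge it is stacked on. -/
def edgeLbl (a : List ℕ) : ℕ → (ℕ × ℕ) × (ℕ × ℕ)
  | 0 => ((0, 1), (1, 1))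
  | i + 1 =>
      if isRight a (i + 1) then
        ((edgeLbl a i).1,
          ((edgeLbl a i).1.1 + (edgeLbl a i).2.1, (edgeLbl a i).1.2 + (edgeLbl a i).2.2))
      else
        (((edgeLbl a i).1.1 + (edgeLbl a i).2.1, (edgeLbl a i).1.2 + (edgeLbl a i).2.2),
          (edgeLbl a i).2)

/-- The label (numerator, denominator) of the vertex with index `v`. -/
def vtxLabel (a : List ℕ) (v : ℕ) : ℕ × ℕ :=
  if v = 0 then (0, 1)
  else if v = 1 then (1, 1)
  else ((edgeLbl a (v - 2)).1.1 + (edgeLbl a (v - 2)).2.1,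
        (edgeLbl a (v - 2)).1.2 + (edgeLbl a (v - 2)).2.2)

/-- `u` and `w` are joined by an edge of the ancestral triangle. -/
def IsEdgeAT (a : List ℕ) (u w : ℕ) : Prop :=
  (u = 0 ∧ w = 1) ∨ (u = 1 ∧ w = 0) ∨
    (2 ≤ u ∧ (w = (edgeIdx a (u - 2)).1 ∨ w = (edgeIdx a (u - 2)).2)) ∨
    (2 ≤ w ∧ (u = (edgeIdx a (w - 2)).1 ∨ u = (edgeIdx a (w - 2)).2))

/-- A step of a path: an edge of the ancestral triangle along which the denominator of the
vertex label strictly decreases. -/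
def IsStep (a : List ℕ) (u w : ℕ) : Prop :=
  IsEdgeAT a u w ∧ (vtxLabel a w).2 < (vtxLabel a u).2

/-- `IsPathFrom a s γ` : `γ` is a path of the ancestral triangle of `a` starting at the
vertex with index `s` and ending at `0/1` or `1/1`, the denominator of the label strictly
decreasing along every edge. -/
def IsPathFrom (a : List ℕ) (s : ℕ) (γ : List ℕ) : Prop :=
  γ.head? = some s ∧ (γ.getLast? = some 0 ∨ γ.getLast? = some 1) ∧ List.Chain' (IsStep a) γ

/-- The (indices of the) triangles cut off to the left of the path by a single step from
vertex `u` down to vertex `w`. -/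
def stepLeft (a : List ℕ) (u w : ℕ) : Finset ℕ :=
  if 2 ≤ u ∧ w = (edgeIdx a (u - 2)).2 then Finset.Ioc (w - 1) (u - 1) else ∅

/-- The set `S_γ` of (indices of) triangles lying on the left side of the path `γ`. -/
def pathLeftSet (a : List ℕ) (γ : List ℕ) : Finset ℕ :=
  (γ.zip γ.tail).foldr (fun p s => stepLeft a p.1 p.2 ∪ s) ∅


/-- The unordered edge `{x, y}` is traversed by the path `γ`. -/
def onPath (γ : List ℕ) (x y : ℕ) : Prop :=
  (x, y) ∈ γ.zip γ.tail ∨ (y, x) ∈ γ.zip γ.tail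

/-- The three sides of the triangle `T_m` (apex index `m + 1`, base `edgeIdx a (m−1)`). -/
def triSides (a : List ℕ) (m : ℕ) : List (ℕ × ℕ) :=
  [(m + 1, (edgeIdx a (m - 1)).1), (m + 1, (edgeIdx a (m - 1)).2),
    ((edgeIdx a (m - 1)).1, (edgeIdx a (m - 1)).2)]

/-- The path `γ` does not go along two sides of the same triangle. -/
def NoTwoSides (a γ : List ℕ) : Prop :=
  ∀ m, 1 ≤ m → m ≤ a.sum - 1 →
    ¬ ∃ e₁ ∈ triSides a m, ∃ e₂ ∈ triSides a m,
        e₁ ≠ e₂ ∧ onPath γ e₁.1 e₁.2 ∧ onPath γ e₂.1 e₂.2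

/-- The label of a vertex reduced modulo 2 (so each label becomes `0/1`, `1/1` or `1/0`). -/
def par2 (a : List ℕ) (v : ℕ) : ℕ × ℕ := ((vtxLabel a v).1 % 2, (vtxLabel a v).2 % 2)

/-- The parity condition on the edges of the Seifert path: if `p/q ≡ 1/1 (mod 2)` it uses
only edges joining a vertex `≡ 1/1` to a vertex `≡ 1/0`; otherwise it uses only edges
joining a vertex `≡ 0/1` to a vertex `≡ 1/0`.  (The top vertex, labeled `p/q`, has index
`a.sum`.) -/
def SeifertParity (a γ : List ℕ) : Prop :=
  if par2 a a.sum = (1, 1) then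
    List.Chain'
      (fun u w => (par2 a u = (1, 1) ∧ par2 a w = (1, 0)) ∨
        (par2 a u = (1, 0) ∧ par2 a w = (1, 1))) γ
  else
    List.Chain'
      (fun u w => (par2 a u = (0, 1) ∧ par2 a w = (1, 0)) ∨
        (par2 a u = (1, 0) ∧ par2 a w = (0, 1))) γ

/-- `γ` is the Seifert path of the ancestral triangle of `a`: a path from the top vertex
that never goes along two sides of the same triangle and satisfies the parity condition. -/
def IsSeifert (a γ : List ℕ) : Prop :=
  IsPathFrom a a.sum γ ∧ NoTwoSides a γ ∧ SeifertParity a γ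

/-- The bottom edge of `Fan_k` (`k ≥ 2`), i.e. the edge shared by `Fan_k` and `Fan_{k−1}`
(the base edge of the first triangle `T_{l_{k−1}}` of `Fan_k`), lies on the path `γ`. -/
def bottomEdgeOn (a γ : List ℕ) (k : ℕ) : Prop :=
  onPath γ (edgeIdx a ((a.take (k - 1)).sum - 1)).1
    (edgeIdx a ((a.take (k - 1)).sum - 1)).2

/-- The signs `t_k ∈ {±1}` computed from the Seifert path `γ`:
`t₁ = +1` if `p/q ≡ 1/0` or `0/1 (mod 2)` and `t₁ = −1` if `p/q ≡ 1/1 (mod 2)`; and for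
`2 ≤ k`, `t_k = −t_{k−1}` if the bottom edge of `Fan_k` lies on `γ`, `t_k = t_{k−1}`
otherwise. -/
def tsgn (a γ : List ℕ) : ℕ → ℤ
  | 0 => 1
  | 1 => if par2 a a.sum = (1, 1) then -1 else 1
  | k + 2 => (if bottomEdgeOn a γ (k + 2) then -1 else 1) * tsgn a γ (k + 1)

/-- `Fan_k` lies on the left side of the path `γ`. -/
def FanLeft (a γ : List ℕ) (k : ℕ) : Prop :=
  ∀ j, 1 ≤ j → j ≤ a.sum - 1 → fanIdx a j = k → j ∈ pathLeftSet a γ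

/-- The position of the triangle `T_j` inside its fan, counted from the bottom
(so `T_j = T_i^{(k)}` with `k = fanIdx a j` and `i = posInFan a j`). -/
def posInFan (a : List ℕ) (j : ℕ) : ℕ :=
  if fanIdx a j = 1 then j else j - (a.take (fanIdx a j - 1)).sum + 1

/-- The sign `e_i = e(T_i^{(k)})` of a triangle, computed from the Seifert path `γ`:
`(−1)^i` if the bottom edge of `Fan_k` lies on `γ`; otherwise, for `k` odd, `+1` if
`Fan_k` is on the left side of `γ` and `(−1)^{i−1}` if on the right side, and for `k`
even, `+1` if `Fan_k` is on the right side and `(−1)^{i−1}` if on the left side. -/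
def esgn (a γ : List ℕ) (j : ℕ) : ℤ :=
  if bottomEdgeOn a γ (fanIdx a j) then (-1) ^ posInFan a j
  else if Odd (fanIdx a j) then
    (if FanLeft a γ (fanIdx a j) then 1 else (-1) ^ (posInFan a j - 1))
  else (if FanLeft a γ (fanIdx a j) then (-1) ^ (posInFan a j - 1) else 1)

/-- The quantity `d(k)` (taking the first applicable case): `a_k − 1` if `k` is odd and
`t_k = −1` or `k` is even and `t_k = +1`; `t_k` if the bottom edge of `Fan_k` lies on the
Seifert path; and `1` otherwise. -/
def dval (a γ : List ℕ) (k : ℕ) : ℤ :=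
  if (Odd k ∧ tsgn a γ k = -1) ∨ (Even k ∧ tsgn a γ k = 1) then (a.getD (k - 1) 0 : ℤ) - 1
  else if bottomEdgeOn a γ k then tsgn a γ k
  else 1

/-- `Σ_{k=1}^n d(k)`, so that `d = −(1/2) · dsum`. -/
def dsum (a γ : List ℕ) : ℤ := ∑ k ∈ Finset.Icc 1 a.length, dval a γ k

/-- The specialized `F`-polynomial: the path-sum `F`-polynomial of `l` with `y_i` replaced
by `−t^{e_i}`, as a Laurent polynomial in `t`. -/
def SFspec (l : List ℕ) (e : ℕ → ℤ) : LaurentPolynomial ℤ :=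
  ∑ᶠ γ ∈ {γ : List ℕ | IsPathFrom l l.sum γ},
    ∏ i ∈ pathLeftSet l γ, (-LaurentPolynomial.T (e i) : LaurentPolynomial ℤ)

/-! ### Auxiliary lemmas for the mirror theorem -/

open LaurentPolynomial in
lemma prod_neg_T (s : Finset ℕ) (g : ℕ → ℤ) :
    ∏ i ∈ s, (-LaurentPolynomial.T (g i) : LaurentPolynomial ℤ) =
      (-1) ^ s.card * LaurentPolynomial.T (∑ i ∈ s, g i) := by
  classical
  induction s using Finset.induction_on with
  | empty => simp
  | insert x s h ih =>
      rw [Finset.prod_insert h, Finset.sum_insert h, Finset.card_insert_of_notMem h, ih,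
        LaurentPolynomial.T_add]
      ring


/-- The vertex swap `0 ↔ 1` implementing the left-right mirror. -/
def sig (x : ℕ) : ℕ := if x = 0 then 1 else if x = 1 then 0 else x

lemma sig_sig (x : ℕ) : sig (sig x) = x := by
  rcases x with _ | _ | n <;> simp [sig]

lemma sig_inj {x y : ℕ} (h : sig x = sig y) : x = y := by
  have := congrArg sig h; rwa [sig_sig, sig_sig] at this

lemma sig_of_two_le {x : ℕ} (h : 2 ≤ x) : sig x = x := by
  unfold sig; split_ifs <;> omega

lemma two_le_sig {x : ℕ} (h : 2 ≤ sig x) : 2 ≤ x := by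
  unfold sig at h; split_ifs at h <;> omega

lemma sig_le {x s : ℕ} (h : x ≤ s) (hs : 2 ≤ s) : sig x ≤ s := by
  unfold sig; split_ifs <;> omega

lemma sig_sub_one (x : ℕ) : sig x - 1 = x - 1 := by
  unfold sig; split_ifs <;> omega

lemma edgeLbl_den_pos (b : List ℕ) (i : ℕ) :
    1 ≤ (edgeLbl b i).1.2 ∧ 1 ≤ (edgeLbl b i).2.2 := by
  induction i with
  | zero => exact ⟨le_refl 1, le_refl 1⟩
  | succ n ih => rw [edgeLbl]; split_ifs <;> simp <;> omega

lemma edgeIdx_le (b : List ℕ) (i : ℕ) :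
    (edgeIdx b i).1 ≤ i + 1 ∧ (edgeIdx b i).2 ≤ i + 1 := by
  induction i with
  | zero => exact ⟨by simp [edgeIdx], by simp [edgeIdx]⟩
  | succ n ih => rw [edgeIdx]; split_ifs <;> simp <;> omega

lemma edgeIdx_ne (b : List ℕ) (i : ℕ) : (edgeIdx b i).1 ≠ (edgeIdx b i).2 := by
  induction i with
  | zero => simp [edgeIdx]
  | succ n ih =>
      have h := edgeIdx_le b n
      rw [edgeIdx]; split_ifs <;> simp <;> omega

lemma vtxLabel_edgeIdx (b : List ℕ) (i : ℕ) :
    vtxLabel b (edgeIdx b i).1 = (edgeLbl b i).1 ∧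
    vtxLabel b (edgeIdx b i).2 = (edgeLbl b i).2 := by
  induction i with
  | zero =>
      constructor
      · show vtxLabel b 0 = (0, 1)
        simp [vtxLabel]
      · show vtxLabel b 1 = (1, 1)
        simp [vtxLabel]
  | succ n ih =>
      have hv : vtxLabel b (n + 2) =
          ((edgeLbl b n).1.1 + (edgeLbl b n).2.1, (edgeLbl b n).1.2 + (edgeLbl b n).2.2) := by
        simp [vtxLabel]
      rw [edgeIdx, edgeLbl]
      split_ifs with h
      · exact ⟨ih.1, by simpa using hv⟩
      · exact ⟨by simpa using hv, ih.2⟩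

lemma vtxLabel_two_le (b : List ℕ) {u : ℕ} (h : 2 ≤ u) :
    vtxLabel b u = ((edgeLbl b (u - 2)).1.1 + (edgeLbl b (u - 2)).2.1,
      (edgeLbl b (u - 2)).1.2 + (edgeLbl b (u - 2)).2.2) := by
  unfold vtxLabel
  rw [if_neg (by omega), if_neg (by omega)]

lemma isStep_iff (b : List ℕ) (u w : ℕ) :
    IsStep b u w ↔ 2 ≤ u ∧ (w = (edgeIdx b (u - 2)).1 ∨ w = (edgeIdx b (u - 2)).2) := by
  constructor
  · rintro ⟨hedge, hlt⟩
    rcases hedge with ⟨h0, h1⟩ | ⟨h0, h1⟩ | ⟨hu, hw⟩ | ⟨hw2, hu⟩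
    · subst h0; subst h1; simp [vtxLabel] at hlt
    · subst h0; subst h1; simp [vtxLabel] at hlt
    · exact ⟨hu, hw⟩
    · exfalso
      have hvw := vtxLabel_two_le b hw2
      have hpos := edgeLbl_den_pos b (w - 2)
      have hvu := vtxLabel_edgeIdx b (w - 2)
      rcases hu with hu | hu
      · rw [hu, hvu.1, hvw] at hlt; simp at hlt <;> omega
      · rw [hu, hvu.2, hvw] at hlt; simp at hlt <;> omega
  · rintro ⟨hu, hw⟩
    refine ⟨Or.inr (Or.inr (Or.inl ⟨hu, hw⟩)), ?_⟩
    have hvu := vtxLabel_two_le b hu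
    have hpos := edgeLbl_den_pos b (u - 2)
    have hve := vtxLabel_edgeIdx b (u - 2)
    rcases hw with hw | hw
    · rw [hw, hve.1, hvu]; simp <;> omega
    · rw [hw, hve.2, hvu]; simp <;> omega

lemma IsStep.lt' {b : List ℕ} {u w : ℕ} (h : IsStep b u w) : w < u ∧ 2 ≤ u := by
  rw [isStep_iff] at h
  obtain ⟨hu, hw⟩ := h
  have hle := edgeIdx_le b (u - 2)
  constructor
  · rcases hw with hw | hw <;> omega
  · exact hu

section Mirror

variable (a1 : ℕ) (rest : List ℕ)

lemma mirror_sum (h1 : 1 ≤ a1) : (1 :: (a1 - 1) :: rest).sum = (a1 :: rest).sum := by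
  simp [List.sum_cons]; omega

lemma ell_mirror (h1 : 1 ≤ a1) (k : ℕ) :
    ell (1 :: (a1 - 1) :: rest) (k + 2) = ell (a1 :: rest) (k + 1) := by
  simp [ell, List.take_succ_cons, List.sum_cons]; omega

lemma fanIdx_mirror (h1 : 1 ≤ a1) {i : ℕ} (hi1 : 1 ≤ i) (hi : i < (a1 :: rest).sum) :
    fanIdx (1 :: (a1 - 1) :: rest) i = fanIdx (a1 :: rest) i + 1 := by
  have hne : {k | i < ell (a1 :: rest) k}.Nonempty := by
    refine ⟨(a1 :: rest).length, ?_⟩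
    simpa [ell, List.take_length] using hi
  have hmem : i < ell (a1 :: rest) (fanIdx (a1 :: rest) i) := Nat.sInf_mem hne
  have hm1 : 1 ≤ fanIdx (a1 :: rest) i := by
    rcases Nat.eq_zero_or_pos (fanIdx (a1 :: rest) i) with h | h
    · rw [h] at hmem; simp [ell] at hmem
    · exact h
  obtain ⟨k, hk⟩ : ∃ k, fanIdx (a1 :: rest) i = k + 1 :=
    ⟨fanIdx (a1 :: rest) i - 1, by omega⟩
  have hmem' : i < ell (1 :: (a1 - 1) :: rest) (fanIdx (a1 :: rest) i + 1) := by
    rw [hk, ell_mirror a1 rest h1, ← hk]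
    exact hmem
  apply le_antisymm
  · exact Nat.sInf_le hmem'
  · have hne' : {k | i < ell (1 :: (a1 - 1) :: rest) k}.Nonempty :=
      ⟨fanIdx (a1 :: rest) i + 1, hmem'⟩
    have hj : i < ell (1 :: (a1 - 1) :: rest) (fanIdx (1 :: (a1 - 1) :: rest) i) :=
      Nat.sInf_mem hne'
    have hj0 : fanIdx (1 :: (a1 - 1) :: rest) i ≠ 0 := by
      intro h; rw [h] at hj; simp [ell] at hj
    have hj1 : fanIdx (1 :: (a1 - 1) :: rest) i ≠ 1 := by
      intro h; rw [h] at hj; simp [ell] at hj; omega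
    obtain ⟨k', hk'⟩ : ∃ k', fanIdx (1 :: (a1 - 1) :: rest) i = k' + 2 :=
      ⟨fanIdx (1 :: (a1 - 1) :: rest) i - 2, by omega⟩
    have h3 : i < ell (a1 :: rest) (k' + 1) := by
      rw [← ell_mirror a1 rest h1, ← hk']; exact hj
    have h4 : fanIdx (a1 :: rest) i ≤ k' + 1 := Nat.sInf_le h3
    omega

lemma isRight_mirror (h1 : 1 ≤ a1) {i : ℕ} (hi1 : 1 ≤ i) (hi : i < (a1 :: rest).sum) :
    (isRight (1 :: (a1 - 1) :: rest) i ↔ ¬ isRight (a1 :: rest) i) := by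
  unfold isRight
  rw [fanIdx_mirror a1 rest h1 hi1 hi]
  exact Nat.odd_add_one

lemma edgeIdx_mirror (h1 : 1 ≤ a1) {i : ℕ} (hi : i < (a1 :: rest).sum) :
    edgeIdx (1 :: (a1 - 1) :: rest) i =
      (sig (edgeIdx (a1 :: rest) i).2, sig (edgeIdx (a1 :: rest) i).1) := by
  induction i with
  | zero => simp [edgeIdx, sig]
  | succ n ih =>
      have hn : n < (a1 :: rest).sum := by omega
      have hflip := isRight_mirror a1 rest h1 (i := n + 1) (by omega) hi
      have h2 : (2 : ℕ) ≤ n + 2 := by omega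
      by_cases hr : isRight (a1 :: rest) (n + 1)
      · have hr' : ¬ isRight (1 :: (a1 - 1) :: rest) (n + 1) := by
          rw [hflip]; simp [hr]
        rw [edgeIdx, if_neg hr', ih hn]
        conv_rhs => rw [edgeIdx, if_pos hr]
        simp [sig_of_two_le h2]
      · have hr' : isRight (1 :: (a1 - 1) :: rest) (n + 1) := by
          rw [hflip]; exact hr
        rw [edgeIdx, if_pos hr', ih hn]
        conv_rhs => rw [edgeIdx, if_neg hr]
        simp [sig_of_two_le h2]

lemma isStep_mirror (h2 : 2 ≤ a1) {u w : ℕ} (hu : u ≤ (a1 :: rest).sum) :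
    IsStep (a1 :: rest) u w ↔ IsStep (1 :: (a1 - 1) :: rest) (sig u) (sig w) := by
  have h1 : 1 ≤ a1 := by omega
  rw [isStep_iff, isStep_iff]
  by_cases h2u : 2 ≤ u
  · have hsu : sig u = u := sig_of_two_le h2u
    have hidx : u - 2 < (a1 :: rest).sum := by
      have : 2 ≤ (a1 :: rest).sum := by simp [List.sum_cons]; omega
      omega
    rw [hsu, edgeIdx_mirror a1 rest h1 hidx]
    constructor
    · rintro ⟨-, hw | hw⟩
      · exact ⟨h2u, Or.inr (by rw [hw])⟩
      · exact ⟨h2u, Or.inl (by rw [hw])⟩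
    · rintro ⟨-, hw | hw⟩
      · exact ⟨h2u, Or.inr (sig_inj hw)⟩
      · exact ⟨h2u, Or.inl (sig_inj hw)⟩
  · constructor
    · rintro ⟨h, -⟩; exact absurd h h2u
    · rintro ⟨h, -⟩; exact absurd (two_le_sig h) h2u

end Mirror

lemma getLast?_map_sig : ∀ (γ : List ℕ), (γ.map sig).getLast? = γ.getLast?.map sig
  | [] => rfl
  | [x] => rfl
  | x :: y :: t => by
      have h := getLast?_map_sig (y :: t)
      simp only [List.map_cons] at h ⊢
      rw [List.getLast?_cons_cons, List.getLast?_cons_cons, h]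

section Paths

variable (a1 : ℕ) (rest : List ℕ) (h2 : 2 ≤ a1)

lemma chain_mirror (h2 : 2 ≤ a1) :
    ∀ (γ : List ℕ) (u : ℕ), u ≤ (a1 :: rest).sum →
      List.Chain' (IsStep (a1 :: rest)) (u :: γ) →
      List.Chain' (IsStep (1 :: (a1 - 1) :: rest)) ((u :: γ).map sig)
  | [], u, hu, _ => by exact List.isChain_singleton _
  | w :: t, u, hu, hch => by
      simp only [List.Chain', List.isChain_cons_cons] at hch
      have hlt := hch.1.lt'
      simp only [List.map_cons, List.Chain', List.isChain_cons_cons]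
      constructor
      · rw [← isStep_mirror a1 rest h2 hu]; exact hch.1
      · rw [← List.map_cons]
        exact chain_mirror h2 t w (by omega) hch.2

lemma chain_mirror' (h2 : 2 ≤ a1) :
    ∀ (γ : List ℕ) (u : ℕ), u ≤ (a1 :: rest).sum →
      List.Chain' (IsStep (1 :: (a1 - 1) :: rest)) (u :: γ) →
      List.Chain' (IsStep (a1 :: rest)) ((u :: γ).map sig)
  | [], u, hu, _ => by exact List.isChain_singleton _
  | w :: t, u, hu, hch => by
      simp only [List.Chain', List.isChain_cons_cons] at hch
      have hlt := hch.1.lt'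
      have hsigu : sig u ≤ (a1 :: rest).sum := sig_le hu (by simp [List.sum_cons]; omega)
      have hstep : IsStep (a1 :: rest) (sig u) (sig w) := by
        rw [isStep_mirror a1 rest h2 hsigu, sig_sig, sig_sig]; exact hch.1
      simp only [List.map_cons, List.Chain', List.isChain_cons_cons]
      exact ⟨hstep, by rw [← List.map_cons]; exact chain_mirror' h2 t w (by omega) hch.2⟩

lemma sum_ge_two : 2 ≤ (a1 :: rest).sum → True := fun _ => trivial

lemma isPathFrom_mirror (h2 : 2 ≤ a1) (γ : List ℕ)
    (h : IsPathFrom (a1 :: rest) (a1 :: rest).sum γ) :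
    IsPathFrom (1 :: (a1 - 1) :: rest) (1 :: (a1 - 1) :: rest).sum (γ.map sig) := by
  obtain ⟨hh, hl, hc⟩ := h
  have hs2 : 2 ≤ (a1 :: rest).sum := by simp [List.sum_cons]; omega
  rcases γ with _ | ⟨v, t⟩
  · simp at hh
  · have hv : v = (a1 :: rest).sum := by simpa using hh
    refine ⟨?_, ?_, ?_⟩
    · have hsig : sig v = v := sig_of_two_le (by omega)
      simp only [List.map_cons, List.head?_cons, hsig]
      rw [mirror_sum a1 rest (by omega), hv]
    · rw [getLast?_map_sig]
      rcases hl with hl | hl <;> rw [hl] <;> simp [sig]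
    · exact chain_mirror a1 rest h2 t v (by omega) hc

lemma isPathFrom_mirror' (h2 : 2 ≤ a1) (γ : List ℕ)
    (h : IsPathFrom (1 :: (a1 - 1) :: rest) (1 :: (a1 - 1) :: rest).sum γ) :
    IsPathFrom (a1 :: rest) (a1 :: rest).sum (γ.map sig) := by
  obtain ⟨hh, hl, hc⟩ := h
  have hs2 : 2 ≤ (a1 :: rest).sum := by simp [List.sum_cons]; omega
  rcases γ with _ | ⟨v, t⟩
  · simp at hh
  · have hv : v = (1 :: (a1 - 1) :: rest).sum := by simpa using hh
    have hv' : v = (a1 :: rest).sum := by rw [hv, mirror_sum a1 rest (by omega)]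
    refine ⟨?_, ?_, ?_⟩
    · have hsig : sig v = v := sig_of_two_le (by omega)
      simp only [List.map_cons, List.head?_cons, hsig]
      rw [hv']
    · rw [getLast?_map_sig]
      rcases hl with hl | hl <;> rw [hl] <;> simp [sig]
    · exact chain_mirror' a1 rest h2 t v (by omega) hc

end Paths

lemma pathLeftSet_cons (b : List ℕ) (x y : ℕ) (l : List ℕ) :
    pathLeftSet b (x :: y :: l) = stepLeft b x y ∪ pathLeftSet b (y :: l) := rfl

lemma pathLeftSet_single (b : List ℕ) (x : ℕ) : pathLeftSet b [x] = ∅ := rfl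

section Partition

variable (a1 : ℕ) (rest : List ℕ)

lemma stepLeft_mirror (h2 : 2 ≤ a1) {u w : ℕ} (hu : u ≤ (a1 :: rest).sum)
    (hstep : IsStep (a1 :: rest) u w) :
    stepLeft (a1 :: rest) u w ∪ stepLeft (1 :: (a1 - 1) :: rest) (sig u) (sig w) =
        Finset.Ioc (w - 1) (u - 1) ∧
      Disjoint (stepLeft (a1 :: rest) u w)
        (stepLeft (1 :: (a1 - 1) :: rest) (sig u) (sig w)) := by
  have h1 : 1 ≤ a1 := by omega
  have hs2 : 2 ≤ (a1 :: rest).sum := by simp [List.sum_cons]; omega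
  obtain ⟨hu2, hw⟩ := (isStep_iff _ u w).mp hstep
  have hidx : u - 2 < (a1 :: rest).sum := by omega
  have hne := edgeIdx_ne (a1 :: rest) (u - 2)
  have hsu : sig u = u := sig_of_two_le hu2
  have hE' := edgeIdx_mirror a1 rest h1 hidx
  rcases hw with hw | hw
  · -- w is the left endpoint : left step, mirror step cuts on the left of the mirror
    have hc1 : ¬ (2 ≤ u ∧ w = (edgeIdx (a1 :: rest) (u - 2)).2) := by
      rintro ⟨-, h⟩; exact hne (hw.symm.trans h)
    have hc2 : 2 ≤ sig u ∧ sig w = (edgeIdx (1 :: (a1 - 1) :: rest) (sig u - 2)).2 := by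
      rw [hsu, hE']; exact ⟨hu2, by rw [hw]⟩
    rw [stepLeft, if_neg hc1, stepLeft, if_pos hc2, hsu, sig_sub_one]
    simp
  · have hc1 : 2 ≤ u ∧ w = (edgeIdx (a1 :: rest) (u - 2)).2 := ⟨hu2, hw⟩
    have hc2 : ¬ (2 ≤ sig u ∧ sig w = (edgeIdx (1 :: (a1 - 1) :: rest) (sig u - 2)).2) := by
      rw [hsu, hE']
      rintro ⟨-, h⟩
      exact hne ((sig_inj h).symm.trans hw)
    rw [stepLeft, if_pos hc1, stepLeft, if_neg hc2]
    simp

lemma leftSet_partition (h2 : 2 ≤ a1) :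
    ∀ (γ : List ℕ) (u : ℕ), γ.head? = some u → u ≤ (a1 :: rest).sum →
      (γ.getLast? = some 0 ∨ γ.getLast? = some 1) →
      List.Chain' (IsStep (a1 :: rest)) γ →
      pathLeftSet (a1 :: rest) γ ∪ pathLeftSet (1 :: (a1 - 1) :: rest) (γ.map sig) =
          Finset.Ioc 0 (u - 1) ∧
        Disjoint (pathLeftSet (a1 :: rest) γ)
          (pathLeftSet (1 :: (a1 - 1) :: rest) (γ.map sig))
  | [], u, hh, _, _, _ => by simp at hh
  | [v], u, hh, hu, hl, _ => by
      have hv : v = u := by simpa using hh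
      have hv01 : v = 0 ∨ v = 1 := by
        rcases hl with hl | hl <;> simp at hl <;> omega
      subst hv
      constructor
      · rw [List.map_singleton, pathLeftSet_single, pathLeftSet_single]
        have : v - 1 = 0 := by omega
        rw [this]
        simp
      · rw [List.map_singleton, pathLeftSet_single]
        simp
  | v :: w :: t, u, hh, hu, hl, hch => by
      have hv : v = u := by simpa using hh
      subst hv
      simp only [List.Chain', List.isChain_cons_cons] at hch
      have hstep := hch.1
      have hlt := hstep.lt'
      have hul : (w :: t).getLast? = some 0 ∨ (w :: t).getLast? = some 1 := by
        rwa [List.getLast?_cons_cons] at hl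
      obtain ⟨ihu, ihd⟩ := leftSet_partition h2 (w :: t) w rfl (by omega) hul hch.2
      obtain ⟨hsu, hsd⟩ := stepLeft_mirror a1 rest h2 hu hstep
      rw [List.map_cons] at ihu ihd
      have hdIoc : Disjoint (Finset.Ioc (w - 1) (v - 1)) (Finset.Ioc 0 (w - 1)) := by
        rw [Finset.disjoint_left]
        intro x hx hx'
        rw [Finset.mem_Ioc] at hx hx'
        omega
      have hS1 : stepLeft (a1 :: rest) v w ⊆ Finset.Ioc (w - 1) (v - 1) := by
        rw [← hsu]; exact Finset.subset_union_left
      have hS2 : stepLeft (1 :: (a1 - 1) :: rest) (sig v) (sig w) ⊆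
          Finset.Ioc (w - 1) (v - 1) := by
        rw [← hsu]; exact Finset.subset_union_right
      have hT1 : pathLeftSet (a1 :: rest) (w :: t) ⊆ Finset.Ioc 0 (w - 1) := by
        rw [← ihu]; exact Finset.subset_union_left
      have hT2 : pathLeftSet (1 :: (a1 - 1) :: rest) (sig w :: t.map sig) ⊆
          Finset.Ioc 0 (w - 1) := by
        rw [← ihu]; exact Finset.subset_union_right
      rw [show (v :: w :: t).map sig = sig v :: sig w :: t.map sig from rfl,
        pathLeftSet_cons, pathLeftSet_cons]
      constructor
      · have hre : (stepLeft (a1 :: rest) v w ∪ pathLeftSet (a1 :: rest) (w :: t)) ∪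
            (stepLeft (1 :: (a1 - 1) :: rest) (sig v) (sig w) ∪
              pathLeftSet (1 :: (a1 - 1) :: rest) (sig w :: t.map sig)) =
            (stepLeft (a1 :: rest) v w ∪
              stepLeft (1 :: (a1 - 1) :: rest) (sig v) (sig w)) ∪
            (pathLeftSet (a1 :: rest) (w :: t) ∪
              pathLeftSet (1 :: (a1 - 1) :: rest) (sig w :: t.map sig)) := by
          ext x
          simp only [Finset.mem_union]
          tauto
        rw [hre, hsu, ihu, Finset.union_comm]
        exact Finset.Ioc_union_Ioc_eq_Ioc (by omega) (by omega)
      · rw [Finset.disjoint_union_left, Finset.disjoint_union_right,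
          Finset.disjoint_union_right]
        exact ⟨⟨hsd, Disjoint.mono hS1 hT2 hdIoc⟩,
          ⟨Disjoint.mono hT1 hS2 hdIoc.symm, ihd⟩⟩

end Partition

section Assembly

variable (a1 : ℕ) (rest : List ℕ)

lemma leftSet_facts (h2 : 2 ≤ a1) (γ : List ℕ)
    (h : IsPathFrom (a1 :: rest) (a1 :: rest).sum γ) :
    pathLeftSet (1 :: (a1 - 1) :: rest) (γ.map sig) =
        Finset.Icc 1 ((a1 :: rest).sum - 1) \ pathLeftSet (a1 :: rest) γ ∧
      pathLeftSet (a1 :: rest) γ ⊆ Finset.Icc 1 ((a1 :: rest).sum - 1) := by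
  obtain ⟨hh, hl, hc⟩ := h
  obtain ⟨hun, hdis⟩ := leftSet_partition a1 rest h2 γ (a1 :: rest).sum hh le_rfl hl hc
  have hIcc : Finset.Icc 1 ((a1 :: rest).sum - 1) = Finset.Ioc 0 ((a1 :: rest).sum - 1) := by
    ext x; simp only [Finset.mem_Icc, Finset.mem_Ioc]; omega
  constructor
  · rw [hIcc, ← hun, Finset.union_sdiff_cancel_left hdis]
  · rw [hIcc, ← hun]; exact Finset.subset_union_left

lemma prod_compl (N : ℕ) (S : Finset ℕ) (hS : S ⊆ Finset.Icc 1 N) (e : ℕ → ℤ) :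
    ∏ i ∈ Finset.Icc 1 N \ S, (-LaurentPolynomial.T (e i) : LaurentPolynomial ℤ) =
      (-1) ^ N * LaurentPolynomial.T (∑ i ∈ Finset.Icc 1 N, e i) *
        ∏ i ∈ S, (-LaurentPolynomial.T (-e i) : LaurentPolynomial ℤ) := by
  classical
  rw [prod_neg_T, prod_neg_T]
  have hNIcc : (Finset.Icc 1 N).card = N := by
    rw [Nat.card_Icc]; omega
  have hSc : S.card ≤ N := by
    rw [← hNIcc]; exact Finset.card_le_card hS
  have hcard : (Finset.Icc 1 N \ S).card = N - S.card := by
    rw [Finset.card_sdiff_of_subset hS, hNIcc]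
  have hsum : ∑ i ∈ Finset.Icc 1 N \ S, e i =
      ∑ i ∈ Finset.Icc 1 N, e i + (- ∑ i ∈ S, e i) := by
    have := Finset.sum_sdiff (f := e) hS
    omega
  have hneg : ∑ i ∈ S, -e i = - ∑ i ∈ S, e i := by
    rw [Finset.sum_neg_distrib]
  rw [hcard, hsum, hneg, LaurentPolynomial.T_add]
  obtain ⟨d, hd⟩ : ∃ d, N = d + S.card := ⟨N - S.card, by omega⟩
  have hd' : N - S.card = d := by omega
  rw [hd']
  have hpow : ((-1 : LaurentPolynomial ℤ)) ^ N = (-1) ^ d * (-1) ^ S.card := by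
    rw [hd, pow_add]
  rw [hpow]
  have hkey : ((-1 : LaurentPolynomial ℤ)) ^ S.card * (-1) ^ S.card = 1 := by
    rw [← pow_add, ← two_mul, pow_mul]
    norm_num
  calc ((-1 : LaurentPolynomial ℤ)) ^ d *
        (LaurentPolynomial.T (∑ i ∈ Finset.Icc 1 N, e i) *
          LaurentPolynomial.T (-∑ i ∈ S, e i))
      = ((-1) ^ S.card * (-1) ^ S.card) * ((-1) ^ d *
        (LaurentPolynomial.T (∑ i ∈ Finset.Icc 1 N, e i) *
          LaurentPolynomial.T (-∑ i ∈ S, e i))) := by rw [hkey, one_mul]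
    _ = (-1) ^ d * (-1) ^ S.card * LaurentPolynomial.T (∑ i ∈ Finset.Icc 1 N, e i) *
        ((-1) ^ S.card * LaurentPolynomial.T (-∑ i ∈ S, e i)) := by ring

lemma finsum_mem_const_mul {α : Type} (s : Set α) (c : LaurentPolynomial ℤ) (hc : IsUnit c)
    (f : α → LaurentPolynomial ℤ) :
    ∑ᶠ i ∈ s, c * f i = c * ∑ᶠ i ∈ s, f i := by
  classical
  rw [finsum_mem_def, finsum_mem_def]
  have hind : (Set.indicator s fun i => c * f i) = fun i => c * Set.indicator s f i := by
    funext x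
    by_cases hx : x ∈ s <;> simp [Set.indicator, hx]
  rw [hind]
  by_cases h : (Function.support (Set.indicator s f)).Finite
  · exact (mul_finsum' _ c h).symm
  · have hsupp : (Function.support fun i => c * Set.indicator s f i) =
        Function.support (Set.indicator s f) := by
      ext x
      simp only [Function.mem_support]
      exact not_congr (IsUnit.mul_right_eq_zero hc)
    rw [finsum_of_infinite_support (by rwa [hsupp]),
      finsum_of_infinite_support h, mul_zero]

end Assembly
/-- **Lemma (mirror specialized F-polynomial).**  Let `p/q = [a₁,…,aₙ]` be an irreducible
fraction with `0 < p/q < 1`, `p` and `q` both odd (`p/q ≡ 1/1 (mod 2)`), `a₁ ≥ 2`, and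
`N = a₁ + ⋯ + aₙ − 1`.  Then, in `ℤ[t, t⁻¹]`,
`S̃F[1, a₁−1, a₂,…,aₙ](t) = (−1)^N · t^s · S̃F[a₁,…,aₙ](t⁻¹)`, where `s = Σ_{i=1}^N e_i`
and the signs `e_i` used on both sides are those of `AT(p/q)` (computed from its Seifert
path `γ`); substituting `t⁻¹` is realized by negating all the exponents `e_i`. -/
theorem mirror_specialized_F (a1 : ℕ) (rest : List ℕ) (p q : ℕ)
    (h2 : 2 ≤ a1) (hpos : ∀ x ∈ rest, 0 < x)
    (hp : 0 < p) (hlt : p < q) (hcop : Nat.Coprime p q)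
    (hpodd : p % 2 = 1) (hqodd : q % 2 = 1)
    (hval : cf (a1 :: rest) = (p : ℚ) / q)
    (γ : List ℕ) (hγ : IsSeifert (a1 :: rest) γ) :
    SFspec (1 :: (a1 - 1) :: rest) (esgn (a1 :: rest) γ) =
      (-1 : LaurentPolynomial ℤ) ^ ((a1 :: rest).sum - 1) *
        LaurentPolynomial.T
          (∑ i ∈ Finset.Icc 1 ((a1 :: rest).sum - 1), esgn (a1 :: rest) γ i) *
        SFspec (a1 :: rest) (fun i => -esgn (a1 :: rest) γ i) := by
  classical
  have hsum : (1 :: (a1 - 1) :: rest).sum = (a1 :: rest).sum := mirror_sum a1 rest (by omega)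
  have hCunit : IsUnit ((-1 : LaurentPolynomial ℤ) ^ ((a1 :: rest).sum - 1) *
      LaurentPolynomial.T (∑ i ∈ Finset.Icc 1 ((a1 :: rest).sum - 1), esgn (a1 :: rest) γ i)) :=
    (isUnit_one.neg.pow _).mul (LaurentPolynomial.isUnit_T _)
  have hbij : Set.BijOn (List.map sig)
      {γ0 : List ℕ | IsPathFrom (a1 :: rest) (a1 :: rest).sum γ0}
      {γ0 : List ℕ | IsPathFrom (1 :: (a1 - 1) :: rest) (1 :: (a1 - 1) :: rest).sum γ0} := by
    refine ⟨fun γ0 hγ0 => isPathFrom_mirror a1 rest h2 γ0 hγ0, ?_, ?_⟩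
    · intro x _ y _ hxy
      have h1 := congrArg (List.map sig) hxy
      simpa [List.map_map, Function.comp_def, sig_sig] using h1
    · intro γ' hγ'
      exact ⟨γ'.map sig, isPathFrom_mirror' a1 rest h2 γ' hγ',
        by simp [List.map_map, Function.comp_def, sig_sig]⟩
  have hpoint : ∀ γ0 ∈ {γ0 : List ℕ | IsPathFrom (a1 :: rest) (a1 :: rest).sum γ0},
      ((-1 : LaurentPolynomial ℤ) ^ ((a1 :: rest).sum - 1) *
          LaurentPolynomial.T
            (∑ i ∈ Finset.Icc 1 ((a1 :: rest).sum - 1), esgn (a1 :: rest) γ i)) *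
        ∏ i ∈ pathLeftSet (a1 :: rest) γ0,
          (-LaurentPolynomial.T (-esgn (a1 :: rest) γ i) : LaurentPolynomial ℤ) =
      ∏ i ∈ pathLeftSet (1 :: (a1 - 1) :: rest) (γ0.map sig),
        (-LaurentPolynomial.T (esgn (a1 :: rest) γ i) : LaurentPolynomial ℤ) := by
    intro γ0 hγ0
    obtain ⟨hls, hsub⟩ := leftSet_facts a1 rest h2 γ0 hγ0
    rw [hls, prod_compl ((a1 :: rest).sum - 1) _ hsub (esgn (a1 :: rest) γ)]
  have hkey := finsum_mem_eq_of_bijOn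
    (f := fun γ0 => ((-1 : LaurentPolynomial ℤ) ^ ((a1 :: rest).sum - 1) *
          LaurentPolynomial.T
            (∑ i ∈ Finset.Icc 1 ((a1 :: rest).sum - 1), esgn (a1 :: rest) γ i)) *
        ∏ i ∈ pathLeftSet (a1 :: rest) γ0,
          (-LaurentPolynomial.T (-esgn (a1 :: rest) γ i) : LaurentPolynomial ℤ))
    (g := fun γ' => ∏ i ∈ pathLeftSet (1 :: (a1 - 1) :: rest) γ',
        (-LaurentPolynomial.T (esgn (a1 :: rest) γ i) : LaurentPolynomial ℤ))
    (List.map sig) hbij hpoint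
  unfold SFspec
  rw [← hkey]
  rw [finsum_mem_const_mul {γ0 : List ℕ | IsPathFrom (a1 :: rest) (a1 :: rest).sum γ0}
    _ hCunit
    (fun γ0 => ∏ i ∈ pathLeftSet (a1 :: rest) γ0,
      (-LaurentPolynomial.T (-esgn (a1 :: rest) γ i) : LaurentPolynomial ℤ))]

end TwoBridge
end
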